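/- Let M₁, M₂ ∈ ℕ with M₁, M₂ ≥ 2, set M := M₁·M₂, and let μ₁, μ₂ ∈ ℝ. For r = 1, 2 let a⁽ʳ⁾ ∈ ℂ^{M_r} be the ULA steering vector with entries a⁽ʳ⁾_m = exp(i·m·μ_r) (m = 0,…,M_r−1), let a := a⁽¹⁾ ⊗ a⁽²⁾, let J₁⁽ʳ⁾, J₂⁽ʳ⁾ ∈ ℂ^{(M_r−1)×M_r} be the maximum-overlap selection matrices ((J₁⁽ʳ⁾)_{k,m} = 1 iff m = k, (J₂⁽ʳ⁾)_{k,m} = 1 iff m = k+1), and define J̃_ℓ⁽¹⁾ := J_ℓ⁽¹⁾ ⊗ I_{M₂}, J̃_ℓ⁽²⁾ := I_{M₁} ⊗ J_ℓ⁽²⁾ (ℓ = 1, 2). Let P_r := (1/M_r)·a⁽ʳ⁾·(a⁽ʳ⁾)ᴴ be the orthogonal projector onto the span of a⁽ʳ⁾. Then for r = 1 and r = 2, the row vector b⁽ʳ⁾ := aᴴ·(J̃₁⁽ʳ⁾)ᴴ·(e^{−iμ_r}·J̃₂⁽ʳ⁾ − J̃₁⁽ʳ⁾) satisfies b⁽ʳ⁾·(I_M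 − (1/M)·a·aᴴ) = b⁽ʳ⁾·( (I_{M₁} − P₁) ⊗ P₂ + P₁ ⊗ (I_{M₂} − P₂) ). -/

import Mathlib

open Matrix BigOperators Kronecker

lemma kron_vecMul_factor {m n p q : Type*} [Fintype m] [Fintype n]
    (u : m → ℂ) (v : n → ℂ) (A : Matrix m p ℂ) (B : Matrix n q ℂ) :
    (fun x : m × n => u x.1 * v x.2) ᵥ* (A ⊗ₖ B) =
      fun y : p × q => (u ᵥ* A) y.1 * (v ᵥ* B) y.2 := by
  funext y
  simp only [Matrix.vecMul, dotProduct, kroneckerMap_apply, Fintype.sum_prod_type,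
    Finset.sum_mul_sum]
  exact Finset.sum_congr rfl fun i _ => Finset.sum_congr rfl fun j _ => by ring

lemma kron_mulVec_factor {m n p q : Type*} [Fintype p] [Fintype q]
    (u : p → ℂ) (v : q → ℂ) (A : Matrix m p ℂ) (B : Matrix n q ℂ) :
    (A ⊗ₖ B) *ᵥ (fun x : p × q => u x.1 * v x.2) =
      fun y : m × n => (A *ᵥ u) y.1 * (B *ᵥ v) y.2 := by
  funext y
  simp only [Matrix.mulVec, dotProduct, kroneckerMap_apply, Fintype.sum_prod_type,
    Finset.sum_mul_sum]
  exact Finset.sum_congr rfl fun i _ => Finset.sum_congr rfl fun j _ => by ring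

lemma steering_annihilate (N : ℕ) (hN : (N : ℂ) ≠ 0) (μ : ℝ) (v : Fin N → ℂ)
    (hv : ∀ m, v m = Complex.exp (Complex.I * ((m : ℕ) : ℂ) * (μ : ℂ))) :
    (star v) ᵥ* ((1 : Matrix (Fin N) (Fin N) ℂ) - (N : ℂ)⁻¹ • vecMulVec v (star v)) = 0 := by
  have key : ∀ j, star (v j) * v j = 1 := by
    intro j
    rw [hv]
    rw [show (star (Complex.exp (Complex.I * ((j : ℕ) : ℂ) * (μ : ℂ))) : ℂ)
        = (starRingEnd ℂ) (Complex.exp (Complex.I * ((j : ℕ) : ℂ) * (μ : ℂ))) from rfl,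
      ← Complex.exp_conj, ← Complex.exp_add]
    rw [show (starRingEnd ℂ) (Complex.I * ((j : ℕ) : ℂ) * (μ : ℂ)) +
        Complex.I * ((j : ℕ) : ℂ) * (μ : ℂ) = 0 by
      simp [_root_.map_mul, Complex.conj_I, Complex.conj_ofReal]]
    exact Complex.exp_zero
  funext l
  simp only [Matrix.vecMul, dotProduct, Matrix.sub_apply, Matrix.one_apply, Matrix.smul_apply,
    vecMulVec_apply, Pi.star_apply, Pi.zero_apply, smul_eq_mul, mul_sub, mul_ite, mul_one,
    mul_zero, Finset.sum_sub_distrib, Finset.sum_ite_eq', Finset.mem_univ, if_true]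
  have : ∀ j ∈ Finset.univ, star (v j) * ((N : ℂ)⁻¹ * (v j * star (v l)))
      = (N : ℂ)⁻¹ * star (v l) := by
    intro j _
    rw [show star (v j) * ((N : ℂ)⁻¹ * (v j * star (v l)))
        = (star (v j) * v j) * ((N : ℂ)⁻¹ * star (v l)) by ring, key, one_mul]
  rw [Finset.sum_congr rfl this, Finset.sum_const, Finset.card_univ, Fintype.card_fin,
    nsmul_eq_mul]
  field_simp
  simp

/-- Key identity of Appendix H of the paper (Theorem 7): for a single source the row
vector `b⁽ʳ⁾ = aᴴ(J̃₁⁽ʳ⁾)ᴴ(e^{−iμ_r}J̃₂⁽ʳ⁾ − J̃₁⁽ʳ⁾)` is unchanged when the projector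
`I − aaᴴ/M` of the matrix-based MSE expression is replaced by the tensor-structured
projector `(I−P₁)⊗P₂ + P₁⊗(I−P₂)` of the tensor-based MSE expression. -/
theorem tensor_vs_matrix_projector_identity
    (M₁ M₂ : ℕ) (h1 : 2 ≤ M₁) (h2 : 2 ≤ M₂) (μ₁ μ₂ : ℝ)
    (a1 : Fin M₁ → ℂ) (a2 : Fin M₂ → ℂ)
    (ha1 : ∀ m, a1 m = Complex.exp (Complex.I * ((m : ℕ) : ℂ) * (μ₁ : ℂ)))
    (ha2 : ∀ m, a2 m = Complex.exp (Complex.I * ((m : ℕ) : ℂ) * (μ₂ : ℂ)))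
    (a : Fin M₁ × Fin M₂ → ℂ) (ha : ∀ m, a m = a1 m.1 * a2 m.2)
    (J11 J21 : Matrix (Fin (M₁ - 1)) (Fin M₁) ℂ)
    (hJ11 : ∀ k m, J11 k m = if (m : ℕ) = (k : ℕ) then 1 else 0)
    (hJ21 : ∀ k m, J21 k m = if (m : ℕ) = (k : ℕ) + 1 then 1 else 0)
    (J12 J22 : Matrix (Fin (M₂ - 1)) (Fin M₂) ℂ)
    (hJ12 : ∀ k m, J12 k m = if (m : ℕ) = (k : ℕ) then 1 else 0)
    (hJ22 : ∀ k m, J22 k m = if (m : ℕ) = (k : ℕ) + 1 then 1 else 0)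
    (P1 : Matrix (Fin M₁) (Fin M₁) ℂ) (hP1 : P1 = ((M₁ : ℂ))⁻¹ • vecMulVec a1 (star a1))
    (P2 : Matrix (Fin M₂) (Fin M₂) ℂ) (hP2 : P2 = ((M₂ : ℂ))⁻¹ • vecMulVec a2 (star a2))
    (b1 : Fin M₁ × Fin M₂ → ℂ)
    (hb1 : b1 = star ((J11 ⊗ₖ (1 : Matrix (Fin M₂) (Fin M₂) ℂ)) *ᵥ a) ᵥ*
      (Complex.exp (-(Complex.I * (μ₁ : ℂ))) • (J21 ⊗ₖ (1 : Matrix (Fin M₂) (Fin M₂) ℂ)) -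
        J11 ⊗ₖ (1 : Matrix (Fin M₂) (Fin M₂) ℂ)))
    (b2 : Fin M₁ × Fin M₂ → ℂ)
    (hb2 : b2 = star (((1 : Matrix (Fin M₁) (Fin M₁) ℂ) ⊗ₖ J12) *ᵥ a) ᵥ*
      (Complex.exp (-(Complex.I * (μ₂ : ℂ))) • ((1 : Matrix (Fin M₁) (Fin M₁) ℂ) ⊗ₖ J22) -
        (1 : Matrix (Fin M₁) (Fin M₁) ℂ) ⊗ₖ J12)) :
    (b1 ᵥ* ((1 : Matrix (Fin M₁ × Fin M₂) (Fin M₁ × Fin M₂) ℂ) -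
        (((M₁ : ℕ) * M₂ : ℕ) : ℂ)⁻¹ • vecMulVec a (star a)) =
      b1 ᵥ* (((1 : Matrix (Fin M₁) (Fin M₁) ℂ) - P1) ⊗ₖ P2 +
        P1 ⊗ₖ ((1 : Matrix (Fin M₂) (Fin M₂) ℂ) - P2))) ∧
    (b2 ᵥ* ((1 : Matrix (Fin M₁ × Fin M₂) (Fin M₁ × Fin M₂) ℂ) -
        (((M₁ : ℕ) * M₂ : ℕ) : ℂ)⁻¹ • vecMulVec a (star a)) =
      b2 ᵥ* (((1 : Matrix (Fin M₁) (Fin M₁) ℂ) - P1) ⊗ₖ P2 +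
        P1 ⊗ₖ ((1 : Matrix (Fin M₂) (Fin M₂) ℂ) - P2))) := by
  have hM1 : (M₁ : ℂ) ≠ 0 := Nat.cast_ne_zero.mpr (by omega)
  have hM2 : (M₂ : ℂ) ≠ 0 := Nat.cast_ne_zero.mpr (by omega)
  have ha' : a = fun p : Fin M₁ × Fin M₂ => a1 p.1 * a2 p.2 := funext ha
  have hann1 : (star a1) ᵥ* ((1 : Matrix (Fin M₁) (Fin M₁) ℂ) - P1) = 0 := by
    rw [hP1]; exact steering_annihilate M₁ hM1 μ₁ a1 ha1
  have hann2 : (star a2) ᵥ* ((1 : Matrix (Fin M₂) (Fin M₂) ℂ) - P2) = 0 := by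
    rw [hP2]; exact steering_annihilate M₂ hM2 μ₂ a2 ha2
  have hmat : (1 : Matrix (Fin M₁ × Fin M₂) (Fin M₁ × Fin M₂) ℂ) -
      (((M₁ : ℕ) * M₂ : ℕ) : ℂ)⁻¹ • vecMulVec a (star a)
      = (((1 : Matrix (Fin M₁) (Fin M₁) ℂ) - P1) ⊗ₖ P2 +
          P1 ⊗ₖ ((1 : Matrix (Fin M₂) (Fin M₂) ℂ) - P2)) +
        ((1 : Matrix (Fin M₁) (Fin M₁) ℂ) - P1) ⊗ₖ ((1 : Matrix (Fin M₂) (Fin M₂) ℂ) - P2) := by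
    ext ⟨i, j⟩ ⟨k, l⟩
    simp only [Matrix.sub_apply, Matrix.add_apply, Matrix.smul_apply, kroneckerMap_apply,
      vecMulVec_apply, Pi.star_apply, ha, hP1, hP2, smul_eq_mul, Matrix.one_apply,
      Prod.mk.injEq, star_mul']
    push_cast
    rw [mul_inv]
    by_cases hik : i = k <;> by_cases hjl : j = l <;>
      simp [hik, hjl] <;> field_simp <;> ring
  have hfac1 : b1 = fun y : Fin M₁ × Fin M₂ =>
      ((star (J11 *ᵥ a1)) ᵥ* (Complex.exp (-(Complex.I * (μ₁ : ℂ))) • J21 - J11)) y.1 *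
        (star a2) y.2 := by
    rw [hb1, ha', kron_mulVec_factor]
    have hs : star (fun y : Fin (M₁ - 1) × Fin M₂ =>
        (J11 *ᵥ a1) y.1 * ((1 : Matrix (Fin M₂) (Fin M₂) ℂ) *ᵥ a2) y.2)
        = fun y : Fin (M₁ - 1) × Fin M₂ => (star (J11 *ᵥ a1)) y.1 * (star a2) y.2 := by
      funext y
      simp [Matrix.one_mulVec, star_mul', mul_comm]
    rw [hs, show (Complex.exp (-(Complex.I * (μ₁ : ℂ))) •
          (J21 ⊗ₖ (1 : Matrix (Fin M₂) (Fin M₂) ℂ)) - J11 ⊗ₖ (1 : Matrix (Fin M₂) (Fin M₂) ℂ))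
        = (Complex.exp (-(Complex.I * (μ₁ : ℂ))) • J21 - J11) ⊗ₖ (1 : Matrix (Fin M₂) (Fin M₂) ℂ)
        by rw [← Matrix.smul_kronecker]; ext ⟨p, q⟩ ⟨r, s⟩; simp [Matrix.one_apply]; split <;> simp,
      kron_vecMul_factor]
    simp [Matrix.vecMul_one]
  have hfac2 : b2 = fun y : Fin M₁ × Fin M₂ =>
      (star a1) y.1 *
        ((star (J12 *ᵥ a2)) ᵥ* (Complex.exp (-(Complex.I * (μ₂ : ℂ))) • J22 - J12)) y.2 := by
    rw [hb2, ha', kron_mulVec_factor]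
    have hs : star (fun y : Fin M₁ × Fin (M₂ - 1) =>
        ((1 : Matrix (Fin M₁) (Fin M₁) ℂ) *ᵥ a1) y.1 * (J12 *ᵥ a2) y.2)
        = fun y : Fin M₁ × Fin (M₂ - 1) => (star a1) y.1 * (star (J12 *ᵥ a2)) y.2 := by
      funext y
      simp [Matrix.one_mulVec, star_mul', mul_comm]
    rw [hs, show (Complex.exp (-(Complex.I * (μ₂ : ℂ))) •
          ((1 : Matrix (Fin M₁) (Fin M₁) ℂ) ⊗ₖ J22) - (1 : Matrix (Fin M₁) (Fin M₁) ℂ) ⊗ₖ J12)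
        = (1 : Matrix (Fin M₁) (Fin M₁) ℂ) ⊗ₖ (Complex.exp (-(Complex.I * (μ₂ : ℂ))) • J22 - J12)
        by rw [← Matrix.kronecker_smul]; ext ⟨p, q⟩ ⟨r, s⟩; simp [Matrix.one_apply]; split <;> simp,
      kron_vecMul_factor]
    simp [Matrix.vecMul_one]
  have hz1 : b1 ᵥ* (((1 : Matrix (Fin M₁) (Fin M₁) ℂ) - P1) ⊗ₖ
      ((1 : Matrix (Fin M₂) (Fin M₂) ℂ) - P2)) = 0 := by
    rw [hfac1, kron_vecMul_factor]
    funext y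
    simp [hann2]
  have hz2 : b2 ᵥ* (((1 : Matrix (Fin M₁) (Fin M₁) ℂ) - P1) ⊗ₖ
      ((1 : Matrix (Fin M₂) (Fin M₂) ℂ) - P2)) = 0 := by
    rw [hfac2, kron_vecMul_factor]
    funext y
    simp [hann1]
  refine ⟨?_, ?_⟩ <;> rw [hmat, Matrix.vecMul_add]
  · rw [hz1, add_zero]
  · rw [hz2, add_zero]
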